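/- If p ∈ 𝒫_n (i.e., p preserves entrywise nonnegativity of all n-by-n nonnegative real matrices), then for every r in {0,...,n-1}, the sum of the coefficients a_k of p over indices k ≡ r (mod n) is nonnegative. -/

import Mathlib

open Polynomial Matrix
open Fin.NatCast

/-- `Pn n p` means the real polynomial `p` preserves entrywise nonnegativity of all
`n`-by-`n` nonnegative real matrices. -/
def Pn (n : ℕ) (p : Polynomial ℝ) : Prop :=
  ∀ A : Matrix (Fin n) (Fin n) ℝ, (∀ i j, 0 ≤ A i j) →
    ∀ i j, 0 ≤ ((Polynomial.aeval A) p) i j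

/-- The `r mod n`-part of a real polynomial. -/
noncomputable def rpart (p : Polynomial ℝ) (n r : ℕ) : Polynomial ℝ :=
  ∑ j ∈ Finset.range (p.natDegree + 1),
    if j % n = r then Polynomial.C (p.coeff j) * Polynomial.X ^ j else 0

/-- The cyclic shift matrix. -/
noncomputable def cyc (n : ℕ) [NeZero n] : Matrix (Fin n) (Fin n) ℝ :=
  Matrix.of fun i j => if j = i + 1 then 1 else 0

lemma cyc_pow (n : ℕ) [NeZero n] (k : ℕ) :
    (cyc n) ^ k = Matrix.of (fun i j => if j = i + (k : Fin n) then 1 else 0) := by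
  induction k with
  | zero =>
    ext i j
    simp [Matrix.one_apply, eq_comm]
  | succ k ih =>
    rw [pow_succ, ih]
    ext i j
    simp only [Matrix.mul_apply, Matrix.of_apply, cyc]
    rw [Finset.sum_eq_single (i + (k : Fin n))]
    · push_cast
      simp [add_assoc]
    · intro b _ hb
      simp [if_neg hb]
    · simp

theorem stmt_5 (n : ℕ) (p : Polynomial ℝ) (hp : Pn n p) (r : ℕ) (hr : r < n) :
    0 ≤ ∑ k ∈ Finset.range (p.natDegree + 1), if k % n = r then p.coeff k else 0 := by
  have hn : NeZero n := ⟨by omega⟩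
  have hApos : ∀ i j, 0 ≤ cyc n i j := by
    intro i j
    simp only [cyc, Matrix.of_apply]
    split <;> norm_num
  have h := hp (cyc n) hApos 0 ⟨r, hr⟩
  rw [Polynomial.aeval_eq_sum_range] at h
  have hentry : ((∑ i ∈ Finset.range (p.natDegree + 1), p.coeff i • cyc n ^ i) :
      Matrix (Fin n) (Fin n) ℝ) 0 ⟨r, hr⟩
      = ∑ k ∈ Finset.range (p.natDegree + 1), if k % n = r then p.coeff k else 0 := by
    rw [Matrix.sum_apply]
    apply Finset.sum_congr rfl
    intro k _
    rw [cyc_pow]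
    simp only [Matrix.smul_apply, Matrix.of_apply, zero_add, smul_eq_mul]
    have : ((⟨r, hr⟩ : Fin n) = (k : Fin n)) ↔ k % n = r := by
      rw [Fin.ext_iff, Fin.val_natCast]
      exact ⟨fun h => h.symm, fun h => h.symm⟩
    by_cases hk : k % n = r
    · rw [if_pos (this.mpr hk), if_pos hk, mul_one]
    · rw [if_neg (fun h => hk (this.mp h)), if_neg hk, mul_zero]
  rw [hentry] at h
  exact h
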